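/- Let x, y be distinct Boolean variables and u, w fresh variables. For any truth assignment v on {x, y}: v makes exactly one literal true in the multiset clause (x ∨ x ∨ y) (counting the two occurrences of x with multiplicity) if and only if v extends to an assignment on {x, y, u, w} making each of the clauses (x ∨ y ∨ u), (x ∨ y ∨ w), (y ∨ u ∨ w) contain exactly one true literal. Moreover, such an extension exists only when v(x) = false and v(y) = true. -/
import Mathlib


/-- The clause on three distinct variables with values `a`, `b`, `c` contains
exactly one true literal. -/
def exactlyOne (a b c : Bool) : Prop :=
  (if a then 1 else 0) + (if b then 1 else 0) + (if c then 1 else 0) = (1 : ℕ)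

theorem duplicate_literal_clause_replacement (vx vy : Bool) :
    ((2 * (if vx then 1 else 0) + (if vy then 1 else 0) = (1 : ℕ)) ↔
      ∃ vu vw : Bool,
        exactlyOne vx vy vu ∧ exactlyOne vx vy vw ∧ exactlyOne vy vu vw) ∧
    ((∃ vu vw : Bool,
        exactlyOne vx vy vu ∧ exactlyOne vx vy vw ∧ exactlyOne vy vu vw) →
      vx = false ∧ vy = true) := by
  cases vx <;> cases vy <;> simp [exactlyOne] <;> decide
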